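/- For all n ≥ 15, with a = (1 + √10)/6, Tₙ = {x ∈ ℝⁿ : x₁ > 1/2, ‖x − a·e₁‖ < 1/2, ‖x‖ < 1} and Sₙ = Tₙ ∪ (−Tₙ), one has vol(Sₙ)/vol(Bₙ) > (1/2)ⁿ. -/

import Mathlib

open MeasureTheory Metric Module RealInnerProductSpace

noncomputable def a : ℝ := (1 + Real.sqrt 10) / 6

noncomputable def T (n : ℕ) (hn : 0 < n) : Set (EuclideanSpace ℝ (Fin n)) :=
  {x | x ⟨0, hn⟩ > 1/2 ∧ ‖x - a • EuclideanSpace.single (⟨0, hn⟩ : Fin n) (1 : ℝ)‖ < 1/2 ∧ ‖x‖ < 1}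

set_option maxHeartbeats 2000000 in
theorem stmt_13 (n : ℕ) (hn : 15 ≤ n) :
    (volume (T n (by omega) ∪ -(T n (by omega)))).toReal >
      (1/2) ^ n * (volume (ball (0 : EuclideanSpace ℝ (Fin n)) 1)).toReal := by
  have hn0 : 0 < n := by omega
  show (volume (T n hn0 ∪ -(T n hn0))).toReal >
      (1/2) ^ n * (volume (ball (0 : EuclideanSpace ℝ (Fin n)) 1)).toReal
  set i0 : Fin n := ⟨0, hn0⟩ with hi0
  -- numeric facts about sqrt 10
  have hs0 : (0:ℝ) ≤ 10 := by norm_num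
  have hsq : Real.sqrt 10 ^ 2 = 10 := Real.sq_sqrt hs0
  have hsnn : (0:ℝ) ≤ Real.sqrt 10 := Real.sqrt_nonneg 10
  have hs_lb : (3.16:ℝ) < Real.sqrt 10 := by nlinarith
  have hs_ub : Real.sqrt 10 < 3.163 := by nlinarith
  have ha_pos : 0 < a := by unfold a; nlinarith
  set t : ℝ := a - 1/2 with ht
  have ht_pos : 0 < t := by rw [ht]; unfold a; nlinarith
  have key_a : 3*a^2 - a = 3/4 := by unfold a; nlinarith
  set ρ : ℝ := Real.sqrt ((4*Real.sqrt 10 - 5)/36) with hρdef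
  have hρ_nonneg : 0 ≤ ρ := Real.sqrt_nonneg _
  have hρ_sq : ρ^2 = (4*Real.sqrt 10 - 5)/36 := Real.sq_sqrt (by nlinarith)
  have hρ_eq : (1/2:ℝ)^2 - t^2 = ρ^2 := by rw [hρ_sq, ht]; unfold a; nlinarith
  -- vectors
  set e : (EuclideanSpace ℝ (Fin n)) := EuclideanSpace.single i0 (1:ℝ) with he
  set c : (EuclideanSpace ℝ (Fin n)) := a • e with hc
  have he_i0 : e i0 = 1 := by simp [he]
  have he_norm : ‖e‖ = 1 := by rw [he, EuclideanSpace.norm_single]; simp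
  have hinner : ∀ y : (EuclideanSpace ℝ (Fin n)), ⟪y, e⟫ = y i0 := by
    intro y; rw [he, EuclideanSpace.inner_single_right]; simp
  have hc_i0 : c i0 = a := by
    have : c i0 = a * e i0 := rfl
    rw [this, he_i0, mul_one]
  have hsub_i0 : ∀ x y : (EuclideanSpace ℝ (Fin n)), (x - y) i0 = x i0 - y i0 := fun _ _ => rfl
  have hnorm_c : ‖c‖^2 = a^2 := by
    rw [hc, norm_smul, he_norm, mul_one, Real.norm_eq_abs, sq_abs]
  have expand : ∀ x : (EuclideanSpace ℝ (Fin n)), ‖x‖^2 = ‖x - c‖^2 + 2*a*(x i0) - a^2 := by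
    intro x
    have h0 : (x - c) + c = x := by abel
    calc ‖x‖^2 = ‖(x - c) + c‖^2 := by rw [h0]
    _ = ‖x - c‖^2 + 2*⟪x - c, c⟫ + ‖c‖^2 := norm_add_sq_real _ _
    _ = ‖x - c‖^2 + 2*(a*((x - c) i0)) + a^2 := by
        rw [hnorm_c, hc, real_inner_smul_right, hinner]
    _ = _ := by rw [hsub_i0, hc_i0]; ring
  have expandCap : ∀ (s : ℝ) (x : (EuclideanSpace ℝ (Fin n))),
      ‖x - (c + s•e)‖^2 = ‖x - c‖^2 - 2*s*(x i0 - a) + s^2 := by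
    intro s x
    have h0 : x - (c + s•e) = (x - c) - s•e := by abel
    rw [h0, norm_sub_sq_real, real_inner_smul_right, hinner, norm_smul, he_norm,
      Real.norm_eq_abs, mul_one, sq_abs, hsub_i0, hc_i0]
    ring
  have haddneg_i0 : ∀ (x v : (EuclideanSpace ℝ (Fin n))), (x + -v) i0 = x i0 - v i0 := fun _ _ => rfl
  have hce_i0 : ∀ s : ℝ, (c + s • e) i0 = a + s := by
    intro s
    have : (c + s • e) i0 = c i0 + s * e i0 := rfl
    rw [this, hc_i0, he_i0, mul_one]
  clear_value t ρ e c
  -- sets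
  set U : Set (EuclideanSpace ℝ (Fin n)) := ball c (1/2) ∩ {x | |x i0 - a| < t} with hU
  set Cp : Set (EuclideanSpace ℝ (Fin n)) := ball c (1/2) ∩ {x | t ≤ x i0 - a} with hCp
  set Cm : Set (EuclideanSpace ℝ (Fin n)) := ball c (1/2) ∩ {x | x i0 - a ≤ -t} with hCm
  set Ap : Set (EuclideanSpace ℝ (Fin n)) := ball (0:(EuclideanSpace ℝ (Fin n))) ρ ∩ {y | 0 ≤ y i0} with hAp
  set Am : Set (EuclideanSpace ℝ (Fin n)) := ball (0:(EuclideanSpace ℝ (Fin n))) ρ ∩ {y | y i0 ≤ 0} with hAm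
  -- U ⊆ T
  have hUT : U ⊆ T n hn0 := by
    rintro x ⟨hx1, hx2⟩
    rw [mem_ball_iff_norm] at hx1
    have hx0 : |x i0 - a| < t := hx2
    rw [abs_lt] at hx0
    have hnx : ‖x‖ < 1 := by
      have h1 := expand x
      have h2 : ‖x - c‖^2 < (1/2)^2 := by
        nlinarith [norm_nonneg (x - c)]
      have hup : x i0 < a + t := by linarith [hx0.2]
      have hprod : 2*a*(x i0) < 2*a*(a+t) :=
        mul_lt_mul_of_pos_left hup (by linarith : (0:ℝ) < 2*a)
      have hexp : 2*a*(a+t) = 4*a^2 - a := by rw [ht]; ring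
      have h3 : ‖x‖^2 < 1 := by
        rw [h1]; rw [hexp] at hprod; nlinarith [key_a, h2]
      nlinarith [norm_nonneg x, h3]
    rw [hc, he] at hx1
    exact ⟨by simp only [ht] at hx0; linarith [hx0.1], hx1, hnx⟩
  -- coverage
  have hcover : ball c (1/2) ⊆ U ∪ Cp ∪ Cm := by
    intro x hx
    rcases lt_or_ge (|x i0 - a|) t with h | h
    · exact Or.inl (Or.inl ⟨hx, h⟩)
    · rcases le_abs.mp h with h' | h'
      · exact Or.inl (Or.inr ⟨hx, h'⟩)
      · exact Or.inr ⟨hx, show x i0 - a ≤ -t by linarith⟩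
  -- cap containments
  have hρ_pos : 0 < ρ := by nlinarith [hρ_sq]
  have hcap : ∀ (s : ℝ) (x : (EuclideanSpace ℝ (Fin n))), s^2 = t^2 → x ∈ ball c (1/2) → t^2 ≤ s * (x i0 - a) →
      x + -(c + s•e) ∈ ball (0:(EuclideanSpace ℝ (Fin n))) ρ := by
    intro s x hs hx1 hx2
    rw [mem_ball_iff_norm] at hx1
    rw [mem_ball_zero_iff]
    have h1 := expandCap s x
    have h2 : x + -(c + s•e) = x - (c + s•e) := by abel
    rw [h2]
    have h3 : ‖x - (c + s•e)‖^2 < ρ^2 := by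
      have k1 : ‖x - c‖^2 < (1/2)^2 := by nlinarith [norm_nonneg (x - c), hx1]
      have k2 : ‖x - (c + s•e)‖^2 ≤ ‖x - c‖^2 - t^2 := by nlinarith [h1, hs, hx2]
      linarith [k1, k2, hρ_eq]
    nlinarith [norm_nonneg (x - (c + s•e)), hρ_nonneg, h3]
  have hCpsub : Cp ⊆ (fun z => (-(c + t•e)) + z) ⁻¹' Ap := by
    rintro x ⟨hx1, hx2⟩
    have hmem : x + -(c + t•e) ∈ ball (0:(EuclideanSpace ℝ (Fin n))) ρ :=
      hcap t x rfl hx1 (by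
        have h2 : t ≤ x i0 - a := hx2
        nlinarith [ht_pos, h2])
    have hcoord : (x + -(c + t•e)) i0 = x i0 - (a + t) := by rw [haddneg_i0, hce_i0]
    have : (-(c + t•e)) + x = x + -(c + t•e) := by abel
    refine Set.mem_preimage.mpr ?_
    rw [this]
    refine ⟨hmem, ?_⟩
    have h2 : t ≤ x i0 - a := hx2
    show 0 ≤ (x + -(c + t•e)) i0
    rw [hcoord]; linarith
  have hCmsub : Cm ⊆ (fun z => (-(c + (-t)•e)) + z) ⁻¹' Am := by
    rintro x ⟨hx1, hx2⟩
    have hmem : x + -(c + (-t)•e) ∈ ball (0:(EuclideanSpace ℝ (Fin n))) ρ :=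
      hcap (-t) x (by ring) hx1 (by
        have h2 : x i0 - a ≤ -t := hx2
        nlinarith [ht_pos, h2])
    have hcoord : (x + -(c + (-t)•e)) i0 = x i0 - (a + -t) := by rw [haddneg_i0, hce_i0]
    have : (-(c + (-t)•e)) + x = x + -(c + (-t)•e) := by abel
    refine Set.mem_preimage.mpr ?_
    rw [this]
    refine ⟨hmem, ?_⟩
    have h2 : x i0 - a ≤ -t := hx2
    show (x + -(c + (-t)•e)) i0 ≤ 0
    rw [hcoord]; linarith
  have hmCp : volume Cp ≤ volume Ap :=
    (measure_mono hCpsub).trans (le_of_eq (measure_preimage_add volume _ Ap))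
  have hmCm : volume Cm ≤ volume Am :=
    (measure_mono hCmsub).trans (le_of_eq (measure_preimage_add volume _ Am))
  -- halfspace volumes
  have hmeas_eval : Measurable fun y : (EuclideanSpace ℝ (Fin n)) => y i0 := (EuclideanSpace.proj i0).continuous.measurable
  have hAm_meas : MeasurableSet Am :=
    measurableSet_ball.inter (measurableSet_le hmeas_eval measurable_const)
  have hplane : volume {y : (EuclideanSpace ℝ (Fin n)) | y i0 = 0} = 0 := by
    have h0 := Measure.addHaar_submodule (volume : Measure (EuclideanSpace ℝ (Fin n)))
      (LinearMap.ker (EuclideanSpace.projₗ i0)) ?_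
    · convert h0 using 2
      ext y; exact Iff.rfl
    · intro h
      have : EuclideanSpace.single i0 (1:ℝ) ∈ LinearMap.ker (EuclideanSpace.projₗ i0) :=
        h ▸ Submodule.mem_top
      simp [LinearMap.mem_ker] at this
  have hAun : Ap ∪ Am = ball (0:(EuclideanSpace ℝ (Fin n))) ρ := by
    ext y
    constructor
    · rintro (⟨h,_⟩|⟨h,_⟩) <;> exact h
    · intro h
      rcases le_total 0 (y i0) with h'|h'
      · exact Or.inl ⟨h, h'⟩
      · exact Or.inr ⟨h, h'⟩
  have hAin : volume (Ap ∩ Am) = 0 := by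
    refine measure_mono_null ?_ hplane
    rintro y ⟨⟨_,h1⟩,⟨_,h2⟩⟩
    exact le_antisymm h2 h1
  have hAsum : volume Ap + volume Am = volume (ball (0:(EuclideanSpace ℝ (Fin n))) ρ) := by
    have h := measure_union_add_inter (μ := volume) Ap hAm_meas
    rw [hAun, hAin, add_zero] at h
    exact h.symm
  -- ball volumes
  haveI : Nontrivial (EuclideanSpace ℝ (Fin n)) :=
    Module.nontrivial_of_finrank_pos (R := ℝ)
      (by rw [finrank_euclideanSpace_fin]; omega)
  have hfr : finrank ℝ (EuclideanSpace ℝ (Fin n)) = n := finrank_euclideanSpace_fin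
  have hb_half : volume (ball c (1/2)) =
      ENNReal.ofReal ((1/2:ℝ)^n) * volume (ball (0:(EuclideanSpace ℝ (Fin n))) 1) := by
    rw [Measure.addHaar_ball volume c (by norm_num : (0:ℝ) ≤ 1/2), hfr]
  have hb_rho : volume (ball (0:(EuclideanSpace ℝ (Fin n))) ρ) =
      ENNReal.ofReal (ρ^n) * volume (ball (0:(EuclideanSpace ℝ (Fin n))) 1) := by
    rw [Measure.addHaar_ball volume 0 hρ_nonneg, hfr]
  -- main ENNReal inequality
  have hmain : ENNReal.ofReal ((1/2:ℝ)^n) * volume (ball (0:(EuclideanSpace ℝ (Fin n))) 1) ≤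
      volume (T n hn0) + ENNReal.ofReal (ρ^n) * volume (ball (0:(EuclideanSpace ℝ (Fin n))) 1) := by
    calc ENNReal.ofReal ((1/2:ℝ)^n) * volume (ball (0:(EuclideanSpace ℝ (Fin n))) 1) = volume (ball c (1/2)) :=
        hb_half.symm
    _ ≤ volume (U ∪ Cp ∪ Cm) := measure_mono hcover
    _ ≤ volume (U ∪ Cp) + volume Cm := measure_union_le _ _
    _ ≤ (volume U + volume Cp) + volume Cm := by
        exact add_le_add_left (measure_union_le _ _) _
    _ ≤ (volume (T n hn0) + volume Ap) + volume Am :=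
        add_le_add (add_le_add (measure_mono hUT) hmCp) hmCm
    _ = volume (T n hn0) + (volume Ap + volume Am) := by rw [add_assoc]
    _ = volume (T n hn0) + volume (ball (0:(EuclideanSpace ℝ (Fin n))) ρ) := by rw [hAsum]
    _ = volume (T n hn0) + ENNReal.ofReal (ρ^n) * volume (ball (0:(EuclideanSpace ℝ (Fin n))) 1) := by rw [hb_rho]
  -- finiteness and toReal
  have hTsub : T n hn0 ⊆ ball (0:(EuclideanSpace ℝ (Fin n))) 1 := fun x hx => mem_ball_zero_iff.mpr hx.2.2
  have hVfin : volume (ball (0:(EuclideanSpace ℝ (Fin n))) 1) ≠ ⊤ := measure_ball_lt_top.ne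
  have hTfin : volume (T n hn0) ≠ ⊤ :=
    ((measure_mono hTsub).trans_lt measure_ball_lt_top).ne
  have hVr : 0 < (volume (ball (0:(EuclideanSpace ℝ (Fin n))) 1)).toReal :=
    ENNReal.toReal_pos (measure_ball_pos volume 0 one_pos).ne' hVfin
  have hRHSfin : volume (T n hn0) + ENNReal.ofReal (ρ^n) * volume (ball (0:(EuclideanSpace ℝ (Fin n))) 1) ≠ ⊤ :=
    ENNReal.add_ne_top.mpr ⟨hTfin, ENNReal.mul_ne_top ENNReal.ofReal_ne_top hVfin⟩
  have hineqR : (1/2:ℝ)^n * (volume (ball (0:(EuclideanSpace ℝ (Fin n))) 1)).toReal ≤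
      (volume (T n hn0)).toReal + ρ^n * (volume (ball (0:(EuclideanSpace ℝ (Fin n))) 1)).toReal := by
    have h1 := ENNReal.toReal_mono hRHSfin hmain
    rwa [ENNReal.toReal_add hTfin (ENNReal.mul_ne_top ENNReal.ofReal_ne_top hVfin),
      ENNReal.toReal_mul, ENNReal.toReal_mul,
      ENNReal.toReal_ofReal (by positivity), ENNReal.toReal_ofReal (by positivity)] at h1
  -- numeric bound
  have hnum : 2 * ρ^n < (1/2:ℝ)^n := by
    have h2ρ : 2*ρ ≤ 0.9222 := by nlinarith [hρ_sq, hρ_nonneg, hs_ub]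
    have hnn : (2*ρ)^n ≤ (0.9222:ℝ)^15 := by
      calc (2*ρ)^n ≤ (0.9222:ℝ)^n := pow_le_pow_left₀ (by positivity) h2ρ n
      _ ≤ (0.9222:ℝ)^15 := pow_le_pow_of_le_one (by norm_num) (by norm_num) hn
    have h922 : (0.9222:ℝ)^15 < 1/2 := by norm_num
    have h3 : (2:ℝ)^n * ρ^n < 1/2 := by rw [← mul_pow]; linarith
    have h2n : (0:ℝ) < 2^n := by positivity
    have h4 : (1/2:ℝ)^n = 1/2^n := by rw [div_pow, one_pow]
    rw [h4, lt_div_iff₀ h2n]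
    nlinarith
  -- disjoint union
  have hTopen : IsOpen (T n hn0) := by
    have hTeq : T n hn0 = {x : (EuclideanSpace ℝ (Fin n)) | 1/2 < x i0} ∩ (ball c (1/2) ∩ ball (0:(EuclideanSpace ℝ (Fin n))) 1) := by
      ext x
      constructor
      · rintro ⟨h1, h2, h3⟩
        rw [← he, ← hc] at h2
        exact ⟨h1, mem_ball_iff_norm.mpr h2, mem_ball_zero_iff.mpr h3⟩
      · rintro ⟨h1, h2, h3⟩
        have h2' := mem_ball_iff_norm.mp h2
        rw [hc, he] at h2'
        exact ⟨h1, h2', mem_ball_zero_iff.mp h3⟩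
    rw [hTeq]
    exact (isOpen_lt continuous_const (EuclideanSpace.proj i0).continuous).inter
      (isOpen_ball.inter isOpen_ball)
  have hTmeas : MeasurableSet (T n hn0) := hTopen.measurableSet
  have hdisj : Disjoint (T n hn0) (-(T n hn0)) := by
    rw [Set.disjoint_left]
    intro x hx hx'
    have h1 : (1/2:ℝ) < x i0 := hx.1
    have h2 : (1/2:ℝ) < (-x) i0 := (Set.mem_neg.mp hx').1
    have h3 : (-x) i0 = -(x i0) := rfl
    rw [h3] at h2
    linarith
  have hu : volume (T n hn0 ∪ -(T n hn0)) = volume (T n hn0) + volume (-(T n hn0)) :=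
    measure_union hdisj hTmeas.neg
  have hneg : volume (-(T n hn0)) = volume (T n hn0) := Measure.measure_neg volume _
  rw [hu, hneg, ENNReal.toReal_add hTfin hTfin]
  have hfinal := mul_lt_mul_of_pos_right hnum hVr
  linarith [hineqR]
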